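/- (Quantum curve for monotone Hurwitz numbers.) Let K = ℚ((ħ)) be the field of formal Laurent series in ħ over ℚ. For each integer d ≥ 0 define c_d = Σ_{m ≥ 0} (f(d,m)/d!)·ħ^{m−d} ∈ K (a well-defined Laurent series supported in degrees ≥ −d; note c_0 = 1), and let Z = Σ_{d ≥ 0} c_d·x^d ∈ K[[x]]. Then x·ħ²·Z″ − ħ·Z′ + Z = 0 in K[[x]], where ′ denotes the formal derivative with respect to x, multiplication by x shifts coefficients, and ħ acts by scalar multiplication in K. (This is the equation [x̂ŷ² + ŷ + 1]Z = 0 with x̂ = x and ŷ = −ħ ∂/∂x.) -/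

import Mathlib

open scoped BigOperators

/-- A tuple `τ` of permutations is a monotone factorisation (tuple) if each `τ i` is a
transposition `(aᵢ bᵢ)` with `aᵢ < bᵢ` and `b₁ ≤ b₂ ≤ ⋯ ≤ bₘ`. -/
def IsMonotoneFactorisation {d m : ℕ} (τ : Fin m → Equiv.Perm (Fin d)) : Prop :=
  ∃ a b : Fin m → Fin d,
    (∀ i, a i < b i) ∧ (∀ i, τ i = Equiv.swap (a i) (b i)) ∧ Monotone b

/-- `f(d, m)`: the number of monotone `m`-tuples of transpositions in `S_d`. -/
noncomputable def numMonotone (d m : ℕ) : ℕ :=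
  Nat.card {τ : Fin m → Equiv.Perm (Fin d) // IsMonotoneFactorisation τ}

lemma swap_lt_inj {α : Type*} [LinearOrder α] [DecidableEq α] {a b c d : α} (h1 : a < b)
    (h2 : c < d) (h : Equiv.swap a b = Equiv.swap c d) : a = c ∧ b = d := by
  have hb : Equiv.swap c d a = b := by rw [← h]; exact Equiv.swap_apply_left a b
  rcases eq_or_ne a c with rfl | hac
  · rw [Equiv.swap_apply_left] at hb; exact ⟨rfl, hb.symm⟩
  rcases eq_or_ne a d with rfl | had
  · rw [Equiv.swap_apply_right] at hb; subst hb; exact absurd (h2.trans h1) (lt_irrefl _)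
  · rw [Equiv.swap_apply_of_ne_of_ne hac had] at hb; exact absurd hb h1.ne

def Qset (d m : ℕ) :=
  {p : (Fin m → ℕ) × (Fin m → ℕ) // (∀ i, p.1 i < p.2 i) ∧ (∀ i, p.2 i < d) ∧ Monotone p.2}

instance (d m : ℕ) : Finite (Qset d m) := by
  apply Finite.of_injective
    (fun p : Qset d m => ((fun i => (⟨p.1.1 i, (p.2.1 i).trans (p.2.2.1 i)⟩ : Fin d)),
      fun i => (⟨p.1.2 i, p.2.2.1 i⟩ : Fin d)))
  rintro ⟨⟨a, b⟩, _⟩ ⟨⟨a', b'⟩, _⟩ h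
  simp only [Prod.mk.injEq, funext_iff, Fin.mk.injEq] at h
  exact Subtype.ext (Prod.ext (funext h.1) (funext h.2))

noncomputable def QsetEquiv (d m : ℕ) :
    {τ : Fin m → Equiv.Perm (Fin d) // IsMonotoneFactorisation τ} ≃ Qset d m := by
  refine (Equiv.ofBijective (fun p : Qset d m =>
    (⟨fun i => Equiv.swap ⟨p.1.1 i, (p.2.1 i).trans (p.2.2.1 i)⟩ ⟨p.1.2 i, p.2.2.1 i⟩,
      ⟨_, _, fun i => p.2.1 i, fun i => rfl, fun i j hij => p.2.2.2 hij⟩⟩ :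
      {τ : Fin m → Equiv.Perm (Fin d) // IsMonotoneFactorisation τ})) ⟨?_, ?_⟩).symm
  · rintro ⟨⟨a, b⟩, ha, hb, hm⟩ ⟨⟨a', b'⟩, ha', hb', hm'⟩ h
    simp only [Subtype.mk.injEq, funext_iff] at h
    refine Subtype.ext (Prod.ext (funext fun i => ?_) (funext fun i => ?_)) <;>
    · have := swap_lt_inj (a := (⟨a i, (ha i).trans (hb i)⟩ : Fin d)) (b := ⟨b i, hb i⟩)
        (c := ⟨a' i, (ha' i).trans (hb' i)⟩) (d := ⟨b' i, hb' i⟩) (ha i) (ha' i) (congrFun (congrArg Subtype.val h) i)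
      simp only [Fin.mk.injEq] at this
      first | exact this.1 | exact this.2
  · rintro ⟨τ, a, b, ha, hτ, hm⟩
    refine ⟨⟨(fun i => (a i : ℕ), fun i => (b i : ℕ)), fun i => ha i, fun i => (b i).2,
      fun i j hij => hm hij⟩, ?_⟩
    exact Subtype.ext (funext fun i => ((hτ i).trans (by simp)).symm)

lemma numMonotone_eq (d m : ℕ) : numMonotone d m = Nat.card (Qset d m) :=
  Nat.card_congr (QsetEquiv d m)

lemma numMonotone_d_zero (d : ℕ) : numMonotone d 0 = 1 := by
  rw [numMonotone_eq]
  have : Unique (Qset d 0) := by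
    refine ⟨⟨⟨(fun i => i.elim0, fun i => i.elim0), fun i => i.elim0, fun i => i.elim0,
      fun i => i.elim0⟩⟩, ?_⟩
    rintro ⟨⟨a, b⟩, _⟩
    exact Subtype.ext (Prod.ext (funext fun i => i.elim0) (funext fun i => i.elim0))
  exact Nat.card_unique

lemma numMonotone_zero (m : ℕ) : numMonotone 0 (m + 1) = 0 := by
  rw [numMonotone_eq]
  have : IsEmpty (Qset 0 (m + 1)) := ⟨fun p => Nat.not_lt_zero _ (p.2.2.1 0)⟩
  exact Nat.card_of_isEmpty

def qsnoc {d m : ℕ} (x : Fin d) (p : Qset (d + 1) m) : Qset (d + 1) (m + 1) :=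
  ⟨(Fin.snoc p.1.1 (x : ℕ), Fin.snoc p.1.2 d), by
      refine ⟨fun i => ?_, fun i => ?_, ?_⟩
      · induction i using Fin.lastCases with
        | last => simpa using x.2
        | cast j => simpa using p.2.1 j
      · induction i using Fin.lastCases with
        | last => simp
        | cast j => simpa using p.2.2.1 j
      · intro i j hij
        induction j using Fin.lastCases with
        | last =>
          induction i using Fin.lastCases with
          | last => exact le_rfl
          | cast i => simpa using Nat.le_of_lt_succ (p.2.2.1 i)
        | cast j =>
          induction i using Fin.lastCases with
          | last => exact absurd (lt_of_le_of_lt hij (Fin.castSucc_lt_last j)) (lt_irrefl _)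
          | cast i =>
            simp only [Fin.snoc_castSucc]
            exact p.2.2.2 (by exact_mod_cast Fin.castSucc_le_castSucc_iff.mp hij)⟩

def QrecEquiv (d m : ℕ) : Qset (d + 1) (m + 1) ≃ (Qset d (m + 1)) ⊕ (Fin d × Qset (d + 1) m) where
  toFun p :=
    if hb : p.1.2 (Fin.last m) < d then
      Sum.inl ⟨p.1, p.2.1, fun i => lt_of_le_of_lt (p.2.2.2 (Fin.le_last i)) hb, p.2.2.2⟩
    else
      Sum.inr ⟨⟨p.1.1 (Fin.last m), by
          have := p.2.1 (Fin.last m); have h2 := p.2.2.1 (Fin.last m); omega⟩,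
        ⟨(Fin.init p.1.1, Fin.init p.1.2), fun i => p.2.1 i.castSucc,
          fun i => p.2.2.1 i.castSucc, fun i j hij => p.2.2.2 (Fin.castSucc_le_castSucc_iff.2 hij)⟩⟩
  invFun q :=
    match q with
    | Sum.inl p => ⟨p.1, p.2.1, fun i => (p.2.2.1 i).trans (Nat.lt_succ_self d), p.2.2.2⟩
    | Sum.inr ⟨x, p⟩ => qsnoc x p
  left_inv p := by
    by_cases hb : p.1.2 (Fin.last m) < d
    · simp only [hb, dif_pos]; exact Subtype.ext rfl
    · have hbd : p.1.2 (Fin.last m) = d := by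
        have := p.2.2.1 (Fin.last m); omega
      simp only [hb, dif_neg, not_false_iff]
      refine Subtype.ext (Prod.ext ?_ ?_)
      · exact Fin.snoc_init_self p.1.1
      · show Fin.snoc (Fin.init p.1.2) d = p.1.2
        funext i
        induction i using Fin.lastCases with
        | last => simp [hbd]
        | cast j => simp [Fin.init]
  right_inv q := by
    match q with
    | Sum.inl p =>
      have hb : p.1.2 (Fin.last m) < d := p.2.2.1 (Fin.last m)
      simp only [hb, dif_pos]
      exact congrArg Sum.inl (Subtype.ext rfl)
    | Sum.inr ⟨x, p⟩ =>
      have hb : ¬ (qsnoc x p).1.2 (Fin.last m) < d := by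
        simp [qsnoc, Fin.snoc_last]
      simp only [hb, dif_neg, not_false_iff]
      refine congrArg Sum.inr (Prod.ext (Fin.ext ?_) (Subtype.ext (Prod.ext ?_ ?_)))
      · exact Fin.snoc_last (α := fun _ => ℕ) (x : ℕ) p.1.1
      · exact Fin.init_snoc (α := fun _ => ℕ) (x : ℕ) p.1.1
      · exact Fin.init_snoc (α := fun _ => ℕ) d p.1.2

lemma numMonotone_rec (d m : ℕ) :
    numMonotone (d + 1) (m + 1) = numMonotone d (m + 1) + d * numMonotone (d + 1) m := by
  rw [numMonotone_eq, numMonotone_eq, numMonotone_eq, Nat.card_congr (QrecEquiv d m),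
    Nat.card_sum, Nat.card_prod, Nat.card_eq_fintype_card (α := Fin d), Fintype.card_fin]

noncomputable def Fps (d : ℕ) : PowerSeries ℚ :=
  PowerSeries.mk fun m => (numMonotone d m : ℚ) / (Nat.factorial d : ℚ)

lemma Fps_rec (d : ℕ) :
    Fps d = PowerSeries.C ((d : ℚ) + 1) * Fps (d + 1)
      - PowerSeries.C ((d : ℚ) * ((d : ℚ) + 1)) * (PowerSeries.X * Fps (d + 1)) := by
  ext m
  have hfac : ((d + 1).factorial : ℚ) = ((d : ℚ) + 1) * (d.factorial : ℚ) := by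
    rw [Nat.factorial_succ]; push_cast; ring
  have hd : (d.factorial : ℚ) ≠ 0 := Nat.cast_ne_zero.2 (Nat.factorial_ne_zero d)
  cases m with
  | zero =>
    simp only [map_sub, PowerSeries.coeff_zero_eq_constantCoeff, map_mul,
      PowerSeries.constantCoeff_C, PowerSeries.constantCoeff_X, Fps, PowerSeries.constantCoeff_mk,
      numMonotone_d_zero, Nat.cast_one, mul_zero, zero_mul, sub_zero, hfac]
    field_simp
  | succ m =>
    simp only [map_sub, PowerSeries.coeff_C_mul, Fps, PowerSeries.coeff_mk,
      PowerSeries.coeff_succ_X_mul, numMonotone_rec d m, hfac]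
    push_cast
    field_simp
    ring


/-- The formal variable `ħ` of `K = ℚ((ħ))`, the field of formal Laurent series over `ℚ`. -/
noncomputable def hbar : LaurentSeries ℚ := HahnSeries.single (1 : ℤ) (1 : ℚ)

/-- `c_d = Σ_{m ≥ 0} (f(d,m)/d!) ħ^{m-d} ∈ ℚ((ħ))`, written as `ħ^{-d}` times the image of
the power series `Σ_{m ≥ 0} (f(d,m)/d!) ħ^m`. -/
noncomputable def waveCoeff (d : ℕ) : LaurentSeries ℚ :=
  HahnSeries.single (-(d : ℤ)) (1 : ℚ) *
    HahnSeries.ofPowerSeries ℤ ℚ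
      (PowerSeries.mk fun m => (numMonotone d m : ℚ) / (Nat.factorial d : ℚ))

lemma waveCoeff_eq (d : ℕ) :
    waveCoeff d = HahnSeries.single (-(d : ℤ)) (1 : ℚ) * HahnSeries.ofPowerSeries ℤ ℚ (Fps d) :=
  rfl

lemma waveCoeff_rec (d : ℕ) :
    waveCoeff d = HahnSeries.single (0 : ℤ) ((d : ℚ) + 1) * (hbar * waveCoeff (d + 1))
      - HahnSeries.single (0 : ℤ) ((d : ℚ) * ((d : ℚ) + 1)) * (hbar ^ 2 * waveCoeff (d + 1)) := by
  rw [waveCoeff_eq, waveCoeff_eq, Fps_rec d]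
  simp only [map_sub, map_mul, HahnSeries.ofPowerSeries_C, HahnSeries.ofPowerSeries_X,
    HahnSeries.C_apply]
  unfold hbar
  rw [sq]
  push_cast
  simp only [mul_sub, sub_mul, ← mul_assoc, HahnSeries.single_mul_single, one_mul, mul_one]
  norm_num
  exact Or.inl (by congr 1; ring)


/-- The wave function `Z = Σ_{d ≥ 0} c_d x^d ∈ K[[x]]`. -/
noncomputable def waveZ : PowerSeries (LaurentSeries ℚ) :=
  PowerSeries.mk fun d => waveCoeff d

lemma natCast_laurent (k : ℕ) :
    ((k : LaurentSeries ℚ)) = HahnSeries.single (0 : ℤ) (k : ℚ) := by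
  rw [← map_natCast (HahnSeries.C : ℚ →+* LaurentSeries ℚ) k, HahnSeries.C_apply]

lemma natCast_laurent' (k : ℕ) :
    ((k : LaurentSeries ℚ) + 1) = HahnSeries.single (0 : ℤ) ((k : ℚ) + 1) := by
  rw [show ((k : LaurentSeries ℚ) + 1) = ((k + 1 : ℕ) : LaurentSeries ℚ) by push_cast; ring,
    natCast_laurent]
  push_cast
  ring_nf


open PowerSeries in
/-- Quantum curve for monotone Hurwitz numbers: `x ħ² Z″ − ħ Z′ + Z = 0` in `K[[x]]`,
i.e. `[x̂ŷ² + ŷ + 1] Z = 0` with `x̂ = x`, `ŷ = −ħ ∂/∂x`. -/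
theorem waveZ_quantum_curve :
    X * C (hbar ^ 2) *
        (PowerSeries.derivative (LaurentSeries ℚ)
          (PowerSeries.derivative (LaurentSeries ℚ) waveZ)) -
      C hbar * PowerSeries.derivative (LaurentSeries ℚ) waveZ + waveZ = 0 := by
  rw [show X * C (hbar ^ 2) *
        (PowerSeries.derivative (LaurentSeries ℚ)
          (PowerSeries.derivative (LaurentSeries ℚ) waveZ)) =
      C (hbar ^ 2) *
        (X * (PowerSeries.derivative (LaurentSeries ℚ)
          (PowerSeries.derivative (LaurentSeries ℚ) waveZ))) from by ring]
  apply PowerSeries.ext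
  intro n
  cases n with
  | zero =>
    simp only [map_add, map_sub, map_zero, coeff_zero_eq_constantCoeff, map_mul,
      constantCoeff_X, zero_mul, mul_zero, zero_sub, constantCoeff_C]
    have h0 : constantCoeff (PowerSeries.derivative (LaurentSeries ℚ) waveZ)
        = waveCoeff 1 := by
      rw [← coeff_zero_eq_constantCoeff, coeff_derivative]
      simp [waveZ]
    rw [h0, show constantCoeff waveZ = waveCoeff 0 from by simp [waveZ]]
    rw [waveCoeff_rec 0]
    norm_num
  | succ n =>
    simp only [map_add, map_sub, map_zero, coeff_C_mul, coeff_succ_X_mul, coeff_derivative,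
      waveZ, coeff_mk]
    have hs : HahnSeries.single (0:ℤ) (((n+1) : ℚ) + 1) * HahnSeries.single (0:ℤ) ((n : ℚ) + 1)
        = HahnSeries.single (0:ℤ) (((n+1) : ℚ) * (((n+1) : ℚ) + 1)) := by
      rw [HahnSeries.single_mul_single]
      norm_num
      ring
    rw [waveCoeff_rec (n + 1), natCast_laurent' n, natCast_laurent' (n + 1)]
    push_cast
    linear_combination (hbar ^ 2 * waveCoeff (n + 2)) * hs
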